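/- Let n and t be integers with 1 ≤ t ≤ n/2 and let p be a homogeneous multilinear polynomial of degree t in x_1,…,x_n. Then there exist polynomials p_0, p_1, …, p_t such that: each p_s is a homogeneous multilinear polynomial of degree s satisfying Σ_{i=1}^n ∂p_s/∂x_i = 0 (i.e., p_s ∈ Ker(W_s)); and for every x ∈ {0,1}^n, p(x) = p_t(x) + Σ_{i=1}^{t} p_{t−i}(x)·Π_{j=1}^{i} (|x| − t + j), i.e. p(x) = p_t(x) + (|x|−t+1)·p_{t−1}(x) + (|x|−t+1)(|x|−t+2)·p_{t−2}(x) + ⋯ + (|x|−t+1)⋯(|x|−1)·|x|·p_0(x). -/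

import Mathlib

open MvPolynomial Finset

variable {n : ℕ}

/-- The space `L_s` of homogeneous multilinear degree-`s` polynomials in `n`
variables, i.e. the span of the monomials `x^S = Π_{i∈S} x_i` with `|S| = s`. -/

noncomputable def homogML (n s : ℕ) : Submodule ℝ (MvPolynomial (Fin n) ℝ) :=
  Submodule.span ℝ
    {p | ∃ S : Finset (Fin n), S.card = s ∧ p = ∏ i ∈ S, X i}

noncomputable def Wop (n : ℕ) :
    MvPolynomial (Fin n) ℝ →ₗ[ℝ] MvPolynomial (Fin n) ℝ :=
  ∑ i : Fin n, (pderiv i).toLinearMap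

noncomputable def Uop (n : ℕ) :
    MvPolynomial (Fin n) ℝ →ₗ[ℝ] MvPolynomial (Fin n) ℝ :=
  LinearMap.mulLeft ℝ (∑ j : Fin n, X j) -
    ∑ i : Fin n, (LinearMap.mulLeft ℝ (X i ^ 2)).comp (pderiv i (R := ℝ)).toLinearMap

lemma pderiv_prodX (i : Fin n) (S : Finset (Fin n)) :
    pderiv i (∏ j ∈ S, (X j : MvPolynomial (Fin n) ℝ)) =
      if i ∈ S then ∏ j ∈ S.erase i, X j else 0 := by
  induction S using Finset.induction with
  | empty => simp
  | insert a s hx ih =>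
    rw [Finset.prod_insert hx, pderiv_mul, ih]
    by_cases h : i = a
    · subst h
      simp [hx, Finset.erase_insert hx]
    · rw [pderiv_X_of_ne (Ne.symm h)]
      by_cases hi : i ∈ s
      · have hne : a ≠ i := fun hh => h hh.symm
        have : (insert a s).erase i = insert a (s.erase i) :=
          Finset.erase_insert_of_ne hne
        rw [this, Finset.prod_insert (by simp [hx, Finset.mem_erase])]
        simp [hi, Finset.mem_insert, h]
      · simp [hi, Finset.mem_insert, h]

lemma Wop_prodX (S : Finset (Fin n)) :
    Wop n (∏ j ∈ S, (X j : MvPolynomial (Fin n) ℝ)) =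
      ∑ i ∈ S, ∏ j ∈ S.erase i, X j := by
  simp [Wop, pderiv_prodX, Finset.sum_ite_mem]

lemma Uop_prodX (S : Finset (Fin n)) :
    Uop n (∏ j ∈ S, (X j : MvPolynomial (Fin n) ℝ)) =
      ∑ i ∈ Sᶜ, ∏ j ∈ insert i S, X j := by
  have hU : Uop n (∏ j ∈ S, (X j : MvPolynomial (Fin n) ℝ)) =
      (∑ i : Fin n, X i * ∏ j ∈ S, X j) -
        ∑ i : Fin n, X i ^ 2 * (if i ∈ S then ∏ j ∈ S.erase i, X j else 0) := by
    simp only [Uop, LinearMap.sub_apply, LinearMap.mulLeft_apply, LinearMap.sum_apply,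
      LinearMap.comp_apply]
    rw [Finset.sum_mul]
    congr 1
    refine Finset.sum_congr rfl fun i _ => ?_
    rw [show ((pderiv i).toLinearMap : MvPolynomial (Fin n) ℝ →ₗ[ℝ] _)
        (∏ j ∈ S, X j) = pderiv i (∏ j ∈ S, X j) from rfl, pderiv_prodX]
  rw [hU]
  have h1 : ∀ i ∈ Sᶜ, (X i : MvPolynomial (Fin n) ℝ) * ∏ j ∈ S, X j = ∏ j ∈ insert i S, X j := by
    intro i hi
    rw [Finset.prod_insert (by simpa using hi)]
  have h2 : ∀ i : Fin n, (X i : MvPolynomial (Fin n) ℝ) ^ 2 *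
      (if i ∈ S then ∏ j ∈ S.erase i, X j else 0) =
      if i ∈ S then X i * ∏ j ∈ S, X j else 0 := by
    intro i
    by_cases hi : i ∈ S
    · simp only [hi, if_true]
      rw [show (X i : MvPolynomial (Fin n) ℝ) ^ 2 * ∏ j ∈ S.erase i, X j
          = X i * (X i * ∏ j ∈ S.erase i, X j) by ring,
        ← Finset.prod_insert (Finset.notMem_erase i S), Finset.insert_erase hi]
    · simp [hi]
  rw [Finset.sum_congr rfl (fun i _ => h2 i), Finset.sum_ite_mem, Finset.univ_inter]
  rw [← Finset.sum_compl_add_sum S (fun i => (X i : MvPolynomial (Fin n) ℝ) * ∏ j ∈ S, X j)]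
  rw [Finset.sum_congr rfl h1]
  abel

lemma mem_homogML_of_card {S : Finset (Fin n)} {s : ℕ} (h : S.card = s) :
    (∏ i ∈ S, (X i : MvPolynomial (Fin n) ℝ)) ∈ homogML n s :=
  Submodule.subset_span ⟨S, h, rfl⟩

lemma Wop_mem {s : ℕ} {p : MvPolynomial (Fin n) ℝ} (hp : p ∈ homogML n (s + 1)) :
    Wop n p ∈ homogML n s := by
  induction hp using Submodule.span_induction with
  | mem p hp =>
    obtain ⟨S, hS, rfl⟩ := hp
    rw [Wop_prodX]
    exact Submodule.sum_mem _ fun i hi =>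
      mem_homogML_of_card (by rw [Finset.card_erase_of_mem hi, hS]; rfl)
  | zero => simp
  | add p q _ _ hp hq => rw [map_add]; exact Submodule.add_mem _ hp hq
  | smul c p _ hp => rw [map_smul]; exact Submodule.smul_mem _ _ hp

lemma Wop_zero_of_mem_zero {p : MvPolynomial (Fin n) ℝ} (hp : p ∈ homogML n 0) :
    Wop n p = 0 := by
  induction hp using Submodule.span_induction with
  | mem p hp =>
    obtain ⟨S, hS, rfl⟩ := hp
    rw [Finset.card_eq_zero] at hS
    subst hS
    rw [Wop_prodX]
    simp
  | zero => simp
  | add p q _ _ hp hq => rw [map_add, hp, hq, add_zero]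
  | smul c p _ hp => rw [map_smul, hp, smul_zero]

lemma Uop_mem {s : ℕ} {p : MvPolynomial (Fin n) ℝ} (hp : p ∈ homogML n s) :
    Uop n p ∈ homogML n (s + 1) := by
  induction hp using Submodule.span_induction with
  | mem p hp =>
    obtain ⟨S, hS, rfl⟩ := hp
    rw [Uop_prodX]
    exact Submodule.sum_mem _ fun i hi =>
      mem_homogML_of_card
        (by rw [Finset.card_insert_of_notMem (by simpa using hi), hS])
  | zero => simp
  | add p q _ _ hp hq => rw [map_add]; exact Submodule.add_mem _ hp hq
  | smul c p _ hp => rw [map_smul]; exact Submodule.smul_mem _ _ hp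

lemma comm_monomial (S : Finset (Fin n)) :
    Wop n (Uop n (∏ i ∈ S, (X i : MvPolynomial (Fin n) ℝ))) =
      Uop n (Wop n (∏ i ∈ S, X i)) + ((n : ℝ) - 2 * S.card) • ∏ i ∈ S, X i := by
  rw [Uop_prodX, Wop_prodX, map_sum, map_sum]
  have hL : ∀ i ∈ Sᶜ, Wop n (∏ j ∈ insert i S, (X j : MvPolynomial (Fin n) ℝ)) =
      (∏ j ∈ S, X j) + ∑ j ∈ S, ∏ l ∈ insert i (S.erase j), X l := by
    intro i hi
    have hiS : i ∉ S := by simpa using hi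
    rw [Wop_prodX, Finset.sum_insert hiS, Finset.erase_insert hiS]
    congr 1
    refine Finset.sum_congr rfl fun j hj => ?_
    rw [Finset.erase_insert_of_ne (fun h => hiS (by rw [h]; exact hj))]
  have hR : ∀ j ∈ S, Uop n (∏ l ∈ S.erase j, (X l : MvPolynomial (Fin n) ℝ)) =
      (∏ l ∈ S, X l) + ∑ i ∈ Sᶜ, ∏ l ∈ insert i (S.erase j), X l := by
    intro j hj
    rw [Uop_prodX]
    have hcompl : (S.erase j)ᶜ = insert j Sᶜ := by
      ext a
      by_cases ha : a = j <;> simp [Finset.mem_erase, Finset.mem_insert, ha, hj]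
    rw [hcompl, Finset.sum_insert (by simp [hj]), Finset.insert_erase hj]
  rw [Finset.sum_congr rfl hL, Finset.sum_congr rfl hR]
  rw [Finset.sum_add_distrib, Finset.sum_add_distrib, Finset.sum_comm]
  have hcard : (Sᶜ.card : ℝ) = (n : ℝ) - S.card := by
    have := Finset.card_compl S
    rw [this]
    have h2 : S.card ≤ n := by simpa using Finset.card_le_card (Finset.subset_univ S)
    simp only [Fintype.card_fin]
    rw [Nat.cast_sub h2]
  rw [Finset.sum_const, Finset.sum_const]
  have : (Sᶜ.card • ∏ i ∈ S, (X i : MvPolynomial (Fin n) ℝ)) =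
      (S.card • ∏ i ∈ S, (X i : MvPolynomial (Fin n) ℝ)) +
        ((n : ℝ) - 2 * S.card) • ∏ i ∈ S, X i := by
    rw [← Nat.cast_smul_eq_nsmul ℝ, ← Nat.cast_smul_eq_nsmul ℝ, ← add_smul, hcard]
    ring_nf
  rw [this]
  abel

lemma comm_mem {s : ℕ} {p : MvPolynomial (Fin n) ℝ} (hp : p ∈ homogML n s) :
    Wop n (Uop n p) = Uop n (Wop n p) + ((n : ℝ) - 2 * s) • p := by
  induction hp using Submodule.span_induction with
  | mem p hp =>
    obtain ⟨S, hS, rfl⟩ := hp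
    rw [comm_monomial, hS]
  | zero => simp
  | add p q _ _ hp hq =>
    rw [map_add, map_add, hp, hq, map_add, map_add, smul_add]
    abel
  | smul c p _ hp =>
    rw [map_smul, map_smul, hp, map_smul, map_smul, smul_add, smul_comm]

lemma eval_Uop {s : ℕ} {p : MvPolynomial (Fin n) ℝ} (hp : p ∈ homogML n s)
    (x : Fin n → ℝ) (hx : ∀ i, x i = 0 ∨ x i = 1) :
    eval x (Uop n p) = ((∑ l, x l) - s) * eval x p := by
  induction hp using Submodule.span_induction with
  | mem p hp =>
    obtain ⟨S, hS, rfl⟩ := hp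
    rw [Uop_prodX, map_sum]
    have h1 : ∀ i ∈ Sᶜ, eval x (∏ j ∈ insert i S, (X j : MvPolynomial (Fin n) ℝ)) =
        x i * ∏ j ∈ S, x j := by
      intro i hi
      rw [Finset.prod_insert (by simpa using hi)]
      simp
    rw [Finset.sum_congr rfl h1]
    have hcube : ∀ i ∈ S, x i * ∏ j ∈ S, x j = ∏ j ∈ S, x j := by
      intro i hi
      rcases hx i with h0 | h1
      · rw [h0, zero_mul, eq_comm, Finset.prod_eq_zero hi h0]
      · rw [h1, one_mul]
    have hsplit : ∑ i ∈ Sᶜ, x i * ∏ j ∈ S, x j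
        = (∑ l, x l) * ∏ j ∈ S, x j - ∑ i ∈ S, x i * ∏ j ∈ S, x j := by
      rw [← Finset.sum_mul, ← Finset.sum_mul, ← Finset.sum_compl_add_sum S x]
      ring
    rw [hsplit, Finset.sum_congr rfl hcube, Finset.sum_const, hS]
    simp only [eval_prod, eval_X, nsmul_eq_mul]
    ring
  | zero => simp
  | add p q _ _ hp hq => rw [map_add, map_add, hp, hq, map_add]; ring
  | smul c p _ hp =>
    rw [map_smul, smul_eq_C_mul, smul_eq_C_mul, map_mul, map_mul, eval_C, hp]
    ring

lemma Wpow_mem {m k : ℕ} {p : MvPolynomial (Fin n) ℝ} (hp : p ∈ homogML n (m + k)) :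
    (Wop n ^ k) p ∈ homogML n m := by
  induction k generalizing p with
  | zero => simpa using hp
  | succ k ih =>
    rw [pow_succ, Module.End.mul_apply]
    exact ih (Wop_mem hp)

lemma Upow_mem {m k : ℕ} {p : MvPolynomial (Fin n) ℝ} (hp : p ∈ homogML n m) :
    (Uop n ^ k) p ∈ homogML n (m + k) := by
  induction k generalizing m p with
  | zero => simpa using hp
  | succ k ih =>
    rw [pow_succ', Module.End.mul_apply]
    exact Uop_mem (ih hp)

lemma comm_pow (m k : ℕ) {p : MvPolynomial (Fin n) ℝ} (hp : p ∈ homogML n m) :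
    Wop n ((Uop n ^ (k + 1)) p) =
      (Uop n ^ (k + 1)) (Wop n p) +
        (((k : ℝ) + 1) * ((n : ℝ) - 2 * m - k)) • (Uop n ^ k) p := by
  induction k with
  | zero =>
    simpa using comm_mem hp
  | succ k ih =>
    have hmem : (Uop n ^ (k + 1)) p ∈ homogML n (m + (k + 1)) := Upow_mem hp
    rw [pow_succ' (Uop n) (k + 1), Module.End.mul_apply, comm_mem hmem, ih,
      map_add, map_smul, ← Module.End.mul_apply (Uop n) (Uop n ^ (k+1)),
      ← pow_succ' (Uop n) (k + 1), ← Module.End.mul_apply (Uop n) (Uop n ^ k),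
      ← pow_succ' (Uop n) k]
    rw [add_assoc, ← add_smul]
    congr 2
    push_cast
    ring

lemma decomp (t : ℕ) (ht2 : 2 * (t + 1) ≤ n) {p : MvPolynomial (Fin n) ℝ}
    (hp : p ∈ homogML n (t + 1)) :
    ∃ q r, q ∈ homogML n (t + 1) ∧ Wop n q = 0 ∧ r ∈ homogML n t ∧
      p = q + Uop n r := by
  set T := t + 1 with hT
  set c : ℕ → ℝ := fun k => (k : ℝ) * ((n : ℝ) - 2 * T + k + 1) with hc
  set a : ℕ → ℝ := fun k => Nat.rec (1 : ℝ) (fun k ak => -ak / c (k + 1)) k with ha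
  have haS : ∀ k, a (k + 1) = -(a k) / c (k + 1) := fun k => rfl
  have hcpos : ∀ k : ℕ, 1 ≤ k → c k ≠ 0 := by
    intro k hk
    have h1 : (2 * T : ℝ) ≤ (n : ℝ) := by exact_mod_cast ht2
    have h2 : (1 : ℝ) ≤ (k : ℝ) := by exact_mod_cast hk
    have : (0 : ℝ) < (k : ℝ) * ((n : ℝ) - 2 * T + k + 1) := by nlinarith
    rw [hc]; exact ne_of_gt this
  set g : ℕ → MvPolynomial (Fin n) ℝ := fun k => (Wop n ^ k) p with hgdef
  have hgW : ∀ k, Wop n (g k) = g (k + 1) := by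
    intro k
    rw [hgdef]
    simp only
    rw [← Module.End.mul_apply, ← pow_succ']
  have hg : ∀ k, k ≤ T → g k ∈ homogML n (T - k) := by
    intro k hk
    exact Wpow_mem (by rwa [Nat.sub_add_cancel hk])
  set q : MvPolynomial (Fin n) ℝ :=
    ∑ k ∈ Finset.range (T + 1), a k • (Uop n ^ k) (g k) with hq
  set r : MvPolynomial (Fin n) ℝ :=
    -∑ k ∈ Finset.range T, a (k + 1) • (Uop n ^ k) (g (k + 1)) with hr
  have hqmem : q ∈ homogML n T := by
    refine Submodule.sum_mem _ fun k hk => Submodule.smul_mem _ _ ?_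
    have hk' : k ≤ T := by simp at hk; omega
    have := Upow_mem (k := k) (hg k hk')
    rwa [Nat.sub_add_cancel hk'] at this
  have hrmem : r ∈ homogML n t := by
    refine Submodule.neg_mem _ (Submodule.sum_mem _ fun k hk => Submodule.smul_mem _ _ ?_)
    have hk' : k + 1 ≤ T := by simp at hk; omega
    have := Upow_mem (k := k) (hg (k + 1) hk')
    have heq : T - (k + 1) + k = t := by omega
    rwa [heq] at this
  have hqsplit : q = a 0 • p +
      ∑ k ∈ Finset.range T, a (k + 1) • (Uop n ^ (k + 1)) (g (k + 1)) := by
    rw [hq, Finset.sum_range_succ', add_comm]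
    congr 1
  have hUr : Uop n r =
      -∑ k ∈ Finset.range T, a (k + 1) • (Uop n ^ (k + 1)) (g (k + 1)) := by
    rw [hr, map_neg, map_sum]
    congr 1
    refine Finset.sum_congr rfl fun k _ => ?_
    rw [map_smul, ← Module.End.mul_apply, ← pow_succ']
  have hpeq : p = q + Uop n r := by
    rw [hqsplit, hUr]
    have ha0 : a 0 = 1 := rfl
    rw [ha0, one_smul]
    abel
  set F : ℕ → MvPolynomial (Fin n) ℝ :=
    fun k => a k • (Uop n ^ k) (g (k + 1)) with hF
  have hkey : ∀ k ∈ Finset.range T,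
      Wop n (a (k + 1) • (Uop n ^ (k + 1)) (g (k + 1)))
        = F (k + 1) + (-(a k)) • (Uop n ^ k) (g (k + 1)) := by
    intro k hk
    have hk' : k + 1 ≤ T := by simp at hk; omega
    have hmem : g (k + 1) ∈ homogML n (T - (k + 1)) := hg _ hk'
    rw [map_smul, comm_pow (T - (k + 1)) k hmem, hgW (k + 1), smul_add, smul_smul]
    congr 2
    have hcast : ((T - (k + 1) : ℕ) : ℝ) = (T : ℝ) - ((k : ℝ) + 1) := by
      rw [Nat.cast_sub hk']
      push_cast
      ring
    rw [hcast]
    have hceq : ((k : ℝ) + 1) * ((n : ℝ) - 2 * ((T : ℝ) - ((k : ℝ) + 1)) - k) = c (k + 1) := by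
      rw [hc]
      push_cast
      ring
    rw [hceq, haS k, div_mul_cancel₀ _ (hcpos (k + 1) (by omega))]
  have hFT : F T = 0 := by
    have hgT : g T ∈ homogML n 0 := by
      have := hg T le_rfl
      rwa [Nat.sub_self] at this
    have : g (T + 1) = 0 := by
      rw [← hgW T, Wop_zero_of_mem_zero hgT]
    rw [hF]
    simp only [this, map_zero, smul_zero]
  have hWq : Wop n q = 0 := by
    rw [hqsplit, map_add, map_smul, map_sum, Finset.sum_congr rfl hkey,
      Finset.sum_add_distrib]
    have h1 : a 0 • Wop n p = F 0 := by
      show a 0 • Wop n p = a 0 • (Uop n ^ 0) (g 1)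
      rw [pow_zero, Module.End.one_apply, hgdef]
      simp only
      rw [pow_one]
    have e1 : ∑ k ∈ Finset.range (T + 1), F k
        = (∑ k ∈ Finset.range T, F (k + 1)) + F 0 := Finset.sum_range_succ' F T
    have e2 : ∑ k ∈ Finset.range (T + 1), F k
        = (∑ k ∈ Finset.range T, F k) + F T := Finset.sum_range_succ F T
    have h2 : ∑ k ∈ Finset.range T, F (k + 1)
        = (∑ k ∈ Finset.range T, F k) + F T - F 0 := by
      rw [eq_sub_iff_add_eq, ← e1, e2]
    have h3 : ∑ k ∈ Finset.range T, (-(a k)) • (Uop n ^ k) (g (k + 1))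
        = -∑ k ∈ Finset.range T, F k := by
      rw [← Finset.sum_neg_distrib]
      refine Finset.sum_congr rfl fun k _ => ?_
      rw [hF, neg_smul]
    rw [h1, h2, h3, hFT]
    abel
  exact ⟨q, r, hqmem, hWq, hrmem, hpeq⟩

lemma Icc_sum_shift (m : ℕ) (f : ℕ → ℝ) :
    ∑ i ∈ Finset.Icc 1 m, f i = ∑ i ∈ Finset.range m, f (i + 1) := by
  rw [← Finset.Ico_add_one_right_eq_Icc, Finset.sum_Ico_eq_sum_range]
  exact Finset.sum_congr (by simp) fun i _ => by rw [Nat.add_comm]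

lemma Icc_prod_shift (m : ℕ) (f : ℕ → ℝ) :
    ∏ i ∈ Finset.Icc 1 m, f i = ∏ i ∈ Finset.range m, f (i + 1) := by
  rw [← Finset.Ico_add_one_right_eq_Icc, Finset.prod_Ico_eq_prod_range]
  exact Finset.prod_congr (by simp) fun i _ => by rw [Nat.add_comm]

lemma prod_step (A : ℝ) (t i : ℕ) :
    ∏ j ∈ Finset.Icc 1 (i + 1 + 1), (A - ((t : ℝ) + 1) + (j : ℝ)) =
      (A - (t : ℝ)) * ∏ j ∈ Finset.Icc 1 (i + 1), (A - (t : ℝ) + (j : ℝ)) := by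
  rw [Icc_prod_shift (i + 1 + 1) (fun j => A - ((t : ℝ) + 1) + (j : ℝ)),
    Icc_prod_shift (i + 1) (fun j => A - (t : ℝ) + (j : ℝ)),
    Finset.prod_range_succ' (fun j => A - ((t : ℝ) + 1) + ((j + 1 : ℕ) : ℝ)) (i + 1)]
  rw [mul_comm]
  congr 1
  · push_cast
    ring
  · refine Finset.prod_congr rfl fun j _ => ?_
    push_cast
    ring

lemma real_step (A : ℝ) (u : ℕ → ℝ) (t : ℕ) :
    (A - (t : ℝ)) *
        (u t + ∑ i ∈ Finset.Icc 1 t, u (t - i) *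
          ∏ j ∈ Finset.Icc 1 i, (A - (t : ℝ) + (j : ℝ)))
      = ∑ i ∈ Finset.Icc 1 (t + 1), u (t + 1 - i) *
          ∏ j ∈ Finset.Icc 1 i, (A - ((t : ℝ) + 1) + (j : ℝ)) := by
  rw [Icc_sum_shift t (fun i => u (t - i) * ∏ j ∈ Finset.Icc 1 i, (A - (t : ℝ) + (j : ℝ))),
    Icc_sum_shift (t + 1)
      (fun i => u (t + 1 - i) * ∏ j ∈ Finset.Icc 1 i, (A - ((t : ℝ) + 1) + (j : ℝ))),
    Finset.sum_range_succ'
      (fun i => u (t + 1 - (i + 1)) *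
        ∏ j ∈ Finset.Icc 1 (i + 1), (A - ((t : ℝ) + 1) + (j : ℝ))) t]
  have h0 : u (t + 1 - (0 + 1)) *
      ∏ j ∈ Finset.Icc (1 : ℕ) (0 + 1), (A - ((t : ℝ) + 1) + (j : ℝ)) = u t * (A - (t : ℝ)) := by
    rw [show (0 + 1 : ℕ) = 1 from rfl, Finset.Icc_self, Finset.prod_singleton]
    push_cast
    ring
  have hterm : ∀ i ∈ Finset.range t,
      u (t + 1 - (i + 1 + 1)) * ∏ j ∈ Finset.Icc 1 (i + 1 + 1), (A - ((t : ℝ) + 1) + (j : ℝ))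
        = (A - (t : ℝ)) * (u (t - (i + 1)) *
            ∏ j ∈ Finset.Icc 1 (i + 1), (A - (t : ℝ) + (j : ℝ))) := by
    intro i hi
    rw [prod_step]
    have h2 : t + 1 - (i + 1 + 1) = t - (i + 1) := by omega
    rw [h2]
    ring
  rw [h0, Finset.sum_congr rfl hterm, ← Finset.mul_sum]
  ring

lemma main_aux (t : ℕ) (ht2 : 2 * t ≤ n) {p : MvPolynomial (Fin n) ℝ}
    (hp : p ∈ homogML n t) :
    ∃ q : ℕ → MvPolynomial (Fin n) ℝ,
      (∀ s, s ≤ t → q s ∈ homogML n s ∧ Wop n (q s) = 0) ∧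
      ∀ x : Fin n → ℝ, (∀ i, x i = 0 ∨ x i = 1) →
        eval x p = eval x (q t)
          + ∑ i ∈ Finset.Icc 1 t,
              eval x (q (t - i)) *
                ∏ j ∈ Finset.Icc 1 i, ((∑ l, x l) - (t : ℝ) + (j : ℝ)) := by
  induction t generalizing p with
  | zero =>
    refine ⟨fun _ => p, fun s hs => ?_, fun x hx => by simp⟩
    obtain rfl := Nat.le_zero.mp hs
    exact ⟨hp, Wop_zero_of_mem_zero hp⟩
  | succ t ih =>
    obtain ⟨q', r, hq'mem, hWq', hrmem, hpeq⟩ := decomp t ht2 hp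
    obtain ⟨qr, hqr, hev⟩ := ih (by omega) hrmem
    refine ⟨fun s => if s = t + 1 then q' else qr s, fun s hs => ?_, fun x hx => ?_⟩
    · dsimp only
      by_cases h : s = t + 1
      · subst h
        rw [if_pos rfl]
        exact ⟨hq'mem, hWq'⟩
      · rw [if_neg h]
        exact hqr s (by omega)
    · have h1 : eval x p = eval x q' + ((∑ l, x l) - (t : ℝ)) * eval x r := by
        rw [hpeq, map_add, eval_Uop hrmem x hx]
      dsimp only
      rw [h1, hev x hx, if_pos rfl]
      have hsum : ∀ i ∈ Finset.Icc 1 (t + 1),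
          eval x (if t + 1 - i = t + 1 then q' else qr (t + 1 - i)) *
              ∏ j ∈ Finset.Icc 1 i, ((∑ l, x l) - ((t + 1 : ℕ) : ℝ) + (j : ℝ))
            = eval x (qr (t + 1 - i)) *
              ∏ j ∈ Finset.Icc 1 i, ((∑ l, x l) - ((t + 1 : ℕ) : ℝ) + (j : ℝ)) := by
        intro i hi
        rw [Finset.mem_Icc] at hi
        rw [if_neg (by omega)]
      rw [Finset.sum_congr rfl hsum]
      push_cast
      have hrs := real_step (∑ l, x l) (fun s => eval x (qr s)) t
      rw [hrs]

/-- Every homogeneous multilinear polynomial of degree `t ≤ n/2` decomposes on the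
hypercube as `p(x) = p_t(x) + Σ_{i=1}^{t} p_{t-i}(x)·Π_{j=1}^{i}(|x|-t+j)` with
each `p_s` a homogeneous multilinear degree-`s` polynomial in `Ker(W_s)`. -/
theorem homog_decomposition (n t : ℕ) (ht1 : 1 ≤ t) (ht2 : 2 * t ≤ n)
    (p : MvPolynomial (Fin n) ℝ) (hp : p ∈ homogML n t) :
    ∃ q : ℕ → MvPolynomial (Fin n) ℝ,
      (∀ s, s ≤ t → q s ∈ homogML n s ∧ Wop n (q s) = 0) ∧
      ∀ x : Fin n → ℝ, (∀ i, x i = 0 ∨ x i = 1) →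
        eval x p = eval x (q t)
          + ∑ i ∈ Finset.Icc 1 t,
              eval x (q (t - i)) *
                ∏ j ∈ Finset.Icc 1 i, ((∑ l, x l) - (t : ℝ) + (j : ℝ)) := by
  exact main_aux t ht2 hp
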